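/- With η, ζ, θ as below, one has lim_{t→0⁺} η(t)³ / X₁(t)³ = 1, lim_{t→0⁺} η(t)ζ(t) / X₁(t)³ = 1, and lim_{t→0⁺} θ(t) / X₁(t)³ = 1. -/

import Mathlib

open MeasureTheory Real

/-- `X1 t = (1 - log t)⁻¹`, the first iterated logarithm. -/
noncomputable def X1 (t : ℝ) : ℝ := (1 - Real.log t)⁻¹

/-- `Xi i` is the paper's `X_i` for `i ≥ 1` (`Xi 0` is the identity placeholder);
`X_i = X_1 ∘ X_{i-1}`. -/
noncomputable def Xi : ℕ → ℝ → ℝ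
  | 0, t => t
  | n+1, t => X1 (Xi n t)


noncomputable def eta (t : ℝ) : ℝ := ∑' i : ℕ, ∏ j ∈ Finset.range (i+1), Xi (j+1) t

noncomputable def zeta (t : ℝ) : ℝ := ∑' i : ℕ, ∏ j ∈ Finset.range (i+1), (Xi (j+1) t)^2

noncomputable def theta (t : ℝ) : ℝ :=
  ∑' i : ℕ, ∑ j ∈ Finset.range (i+1),
    (∏ l ∈ Finset.range (j+1), (Xi (l+1) t)^3) *
    (∏ l ∈ Finset.Ico (j+1) (i+1), (Xi (l+1) t)^2)

open Filter

/-! ### Elementary logarithm inequalities -/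

/-- Padé lower bound: `2(t-1) ≤ (t+1) log t` for `t ≥ 1`. -/
lemma IterLog.log_pade_low {t : ℝ} (ht : 1 ≤ t) : 2*(t-1) ≤ (t+1) * Real.log t := by
  have ht0 : (0:ℝ) < t := lt_of_lt_of_le one_pos ht
  set g : ℝ → ℝ := fun y => (y+1) * Real.log y - 2*(y-1) with hg
  have hder : ∀ x : ℝ, 0 < x → HasDerivAt g (Real.log x + x⁻¹ - 1) x := by
    intro x hx
    have h1 : HasDerivAt (fun y : ℝ => (y+1) * Real.log y)
        (1 * Real.log x + (x+1) * x⁻¹) x :=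
      ((hasDerivAt_id x).add_const 1).mul (Real.hasDerivAt_log hx.ne')
    have h2 : HasDerivAt (fun y : ℝ => 2*(y-1)) (2*1) x :=
      ((hasDerivAt_id x).sub_const 1).const_mul 2
    have := h1.sub h2
    refine this.congr_deriv ?_
    have hxx : x * x⁻¹ = 1 := mul_inv_cancel₀ hx.ne'
    linear_combination hxx
  have hmono : MonotoneOn g (Set.Ici 1) := by
    apply monotoneOn_of_deriv_nonneg (convex_Ici 1)
    · intro x hx
      exact (hder x (lt_of_lt_of_le one_pos hx)).continuousAt.continuousWithinAt
    · intro x hx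
      rw [interior_Ici] at hx
      exact (hder x (lt_trans one_pos hx)).differentiableAt.differentiableWithinAt
    · intro x hx
      rw [interior_Ici] at hx
      have hx0 : (0:ℝ) < x := lt_trans one_pos hx
      rw [(hder x hx0).deriv]
      have hlog : 1 - x⁻¹ ≤ Real.log x := Real.one_sub_inv_le_log_of_pos hx0
      linarith
  have h1 : g 1 ≤ g t := hmono (by simp) ht ht
  have hg1 : g 1 = 0 := by simp [hg]
  rw [hg1] at h1
  simp only [hg] at h1
  linarith

/-- Padé upper bound: `2 t log t ≤ t² - 1` for `t ≥ 1`. -/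
lemma IterLog.log_pade_up {t : ℝ} (ht : 1 ≤ t) : 2*t*Real.log t ≤ t^2 - 1 := by
  have ht0 : (0:ℝ) < t := lt_of_lt_of_le one_pos ht
  set g : ℝ → ℝ := fun y => y^2 - 1 - 2*y*Real.log y with hg
  have hder : ∀ x : ℝ, 0 < x → HasDerivAt g (2*x - 2*Real.log x - 2) x := by
    intro x hx
    have h1 : HasDerivAt (fun y : ℝ => y^2 - 1) (2*x) x := by
      simpa using ((hasDerivAt_pow 2 x).sub_const 1)
    have h2 : HasDerivAt (fun y : ℝ => 2*y*Real.log y)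
        ((2*1) * Real.log x + (2*x) * x⁻¹) x :=
      (((hasDerivAt_id x).const_mul 2).mul (Real.hasDerivAt_log hx.ne'))
    have := h1.sub h2
    refine this.congr_deriv ?_
    have hxx : x * x⁻¹ = 1 := mul_inv_cancel₀ hx.ne'
    linear_combination (-2 : ℝ) * hxx
  have hmono : MonotoneOn g (Set.Ici 1) := by
    apply monotoneOn_of_deriv_nonneg (convex_Ici 1)
    · intro x hx
      exact (hder x (lt_of_lt_of_le one_pos hx)).continuousAt.continuousWithinAt
    · intro x hx
      rw [interior_Ici] at hx
      exact (hder x (lt_trans one_pos hx)).differentiableAt.differentiableWithinAt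
    · intro x hx
      rw [interior_Ici] at hx
      have hx0 : (0:ℝ) < x := lt_trans one_pos hx
      rw [(hder x hx0).deriv]
      have hlog : Real.log x ≤ x - 1 := Real.log_le_sub_one_of_pos hx0
      linarith
  have h1 : g 1 ≤ g t := hmono (by simp) ht ht
  have hg1 : g 1 = 0 := by simp [hg]
  rw [hg1] at h1
  simp only [hg] at h1
  linarith

lemma IterLog.log_one_add_le {e : ℝ} (h0 : 0 ≤ e) (h1 : e ≤ 1) :
    Real.log (1+e) ≤ e - e^2/5 := by
  have ht : (1:ℝ) ≤ 1 + e := by linarith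
  have h := IterLog.log_pade_up ht
  have hL : 0 ≤ Real.log (1+e) := Real.log_nonneg ht
  nlinarith [h, hL]

/-- key numeric fact 1: `(1-x)² ≤ 5 (log (X1 x) - log x)` for `x ∈ (0,1)`. -/
lemma IterLog.key1 {x : ℝ} (h0 : 0 < x) (h1 : x < 1) :
    (1-x)^2 ≤ 5 * (Real.log (X1 x) - Real.log x) := by
  have hlx : Real.log x < 0 := Real.log_neg h0 h1
  set u : ℝ := -Real.log x with hu
  have hu0 : 0 < u := by rw [hu]; linarith
  have hXlog : Real.log (X1 x) = -Real.log (1 + u) := by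
    rw [X1, Real.log_inv, show (1:ℝ) - Real.log x = 1 + u from by rw [hu]; ring]
  have hy : 1 - x ≤ u := by
    have h := Real.log_le_sub_one_of_pos h0
    rw [hu]; linarith
  have hy0 : 0 < 1 - x := by linarith
  -- monotonicity: v - log(1+v) is monotone, compare at 1-x and u
  have hmono : (1-x) - Real.log (1 + (1-x)) ≤ u - Real.log (1+u) := by
    have h2x : (0:ℝ) < 1 + (1-x) := by linarith
    have h1u : (0:ℝ) < 1 + u := by linarith
    have hq : (0:ℝ) < (1+u)/(1+(1-x)) := by positivity
    have hll := Real.log_le_sub_one_of_pos hq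
    rw [Real.log_div (by linarith) (by linarith)] at hll
    have hfrac : (1+u)/(1+(1-x)) - 1 = (u - (1-x))/(1+(1-x)) := by
      field_simp
      ring
    rw [hfrac] at hll
    have hfr2 : (u - (1-x))/(1+(1-x)) ≤ u - (1-x) := by
      rw [div_le_iff₀ h2x]
      nlinarith
    linarith
  have hsmall : (1-x)^2/5 ≤ (1-x) - Real.log (1+(1-x)) :=
    by have := IterLog.log_one_add_le hy0.le (by linarith : (1:ℝ)-x ≤ 1); linarith
  have hlogx : Real.log x = -u := by rw [hu]; ring
  rw [hXlog, hlogx]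
  clear_value u
  linarith

/-- key numeric fact 2: `X1 x · (1-x)² ≤ (1 - X1 x)²` for `x ∈ (0,1)`. -/
lemma IterLog.key2 {x : ℝ} (h0 : 0 < x) (h1 : x < 1) :
    X1 x * (1-x)^2 ≤ (1 - X1 x)^2 := by
  have hlx : Real.log x < 0 := Real.log_neg h0 h1
  set u : ℝ := -Real.log x with hu
  have hu0 : 0 < u := by rw [hu]; linarith
  have h1u : (0:ℝ) < 1 + u := by linarith
  have hX : X1 x = (1+u)⁻¹ := by
    rw [X1, show (1:ℝ) - Real.log x = 1 + u from by rw [hu]; ring]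
  -- Padé lower bound at 1/x : 2(1-x) ≤ (1+x) u
  have hpade : 2*(1-x) ≤ (1+x) * u := by
    have hxi : (1:ℝ) ≤ x⁻¹ := (one_le_inv_iff₀.mpr ⟨h0, h1.le⟩)
    have hpl := IterLog.log_pade_low hxi
    rw [Real.log_inv] at hpl
    rw [← hu] at hpl
    have hx0 : x ≠ 0 := h0.ne'
    -- 2*(x⁻¹ - 1) ≤ (x⁻¹ + 1) * u ; multiply by x > 0
    have h2 := mul_le_mul_of_nonneg_left hpl h0.le
    have hxx : x * x⁻¹ = 1 := mul_inv_cancel₀ hx0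
    have hxxu : x * x⁻¹ * u = u := by rw [hxx, one_mul]
    clear_value u
    nlinarith [h2, hxx, hxxu]
  have key : (1-x)^2 * (1+u) ≤ u^2 := by
    nlinarith [hpade, sq_nonneg ((1+x)*u - 2*(1-x)), sq_nonneg (1-x),
      mul_nonneg (sub_nonneg.mpr hpade) (mul_nonneg (by linarith : (0:ℝ) ≤ 1-x)
        (by nlinarith : (0:ℝ) ≤ 4 - 2*(1-x) + (1-x)^2)), sq_nonneg u, h0.le, hu0.le]
  rw [hX]
  clear_value u
  have h1u' : (1:ℝ) + u ≠ 0 := h1u.ne'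
  have hv : (1:ℝ) - (1+u)⁻¹ = u / (1+u) := by
    field_simp
    ring
  rw [hv, div_pow, show (1+u)⁻¹ * (1-x)^2 = (1-x)^2 / (1+u) from by ring]
  rw [div_le_div_iff₀ h1u (by positivity)]
  calc (1-x)^2 * (1+u)^2 = ((1-x)^2*(1+u))*(1+u) := by ring
  _ ≤ u^2 * (1+u) := mul_le_mul_of_nonneg_right key h1u.le

/-! ### Iterates -/

lemma IterLog.Xi_mem {s : ℝ} (hs : s ∈ Set.Ioo (0:ℝ) 1) :
    ∀ n, Xi n s ∈ Set.Ioo (0:ℝ) 1 := by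
  intro n
  induction n with
  | zero => exact hs
  | succ n ih =>
    have hlog : Real.log (Xi n s) < 0 := Real.log_neg ih.1 ih.2
    have h1 : (1:ℝ) < 1 - Real.log (Xi n s) := by linarith
    constructor
    · show 0 < (1 - Real.log (Xi n s))⁻¹
      positivity
    · show (1 - Real.log (Xi n s))⁻¹ < 1
      exact inv_lt_one_of_one_lt₀ h1

lemma IterLog.Xi_shift (n : ℕ) (t : ℝ) : Xi (n+1) t = Xi n (X1 t) := by
  induction n with
  | zero => rfl
  | succ n ih =>
    show X1 (Xi (n+1) t) = X1 (Xi n (X1 t))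
    rw [ih]

noncomputable def IterLog.bseq (s : ℝ) (i : ℕ) : ℝ := ∏ j ∈ Finset.range (i+1), Xi (j+1) s

noncomputable def IterLog.tseq (s : ℝ) (i : ℕ) : ℝ :=
  ∑ j ∈ Finset.range (i+1),
    (∏ l ∈ Finset.range (j+1), (Xi (l+1) s)^3) *
    (∏ l ∈ Finset.Ico (j+1) (i+1), (Xi (l+1) s)^2)

namespace IterLog

lemma eta_eq (s : ℝ) : eta s = ∑' i, bseq s i := rfl

lemma zeta_eq (s : ℝ) : zeta s = ∑' i, (bseq s i)^2 := by
  apply tsum_congr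
  intro i
  rw [bseq, ← Finset.prod_pow]

lemma theta_eq (s : ℝ) : theta s = ∑' i, tseq s i := rfl

lemma Xi_one (s : ℝ) : Xi 1 s = X1 s := rfl

lemma bseq_pos {s : ℝ} (hs : s ∈ Set.Ioo (0:ℝ) 1) (i : ℕ) : 0 < bseq s i :=
  Finset.prod_pos fun j _ => (Xi_mem hs (j+1)).1

lemma bseq_le_one {s : ℝ} (hs : s ∈ Set.Ioo (0:ℝ) 1) (i : ℕ) : bseq s i ≤ 1 :=
  Finset.prod_le_one (fun j _ => (Xi_mem hs (j+1)).1.le) (fun j _ => (Xi_mem hs (j+1)).2.le)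

lemma bseq_zero (s : ℝ) : bseq s 0 = X1 s := by
  rw [bseq, Finset.prod_range_one]
  rfl

lemma bseq_succ (s : ℝ) (i : ℕ) : bseq s (i+1) = X1 s * bseq (X1 s) i := by
  rw [bseq, Finset.prod_range_succ' (fun j => Xi (j+1) s) (i+1), mul_comm]
  congr 1
  rw [bseq]
  exact Finset.prod_congr rfl fun j _ => Xi_shift (j+1) s

lemma X1_mem {s : ℝ} (hs : s ∈ Set.Ioo (0:ℝ) 1) : X1 s ∈ Set.Ioo (0:ℝ) 1 :=
  Xi_mem hs 1

lemma bseq_bound {s : ℝ} (hs : s ∈ Set.Ioo (0:ℝ) 1) (i : ℕ) :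
    bseq s i * (1 - X1 s)^2 ≤ X1 s * (1 - Xi (i+1) s)^2 := by
  induction i with
  | zero =>
    rw [bseq_zero, Xi_one]
  | succ i ih =>
    have hmem := Xi_mem hs (i+1)
    have hk : X1 (Xi (i+1) s) * (1 - Xi (i+1) s)^2 ≤ (1 - X1 (Xi (i+1) s))^2 :=
      key2 hmem.1 hmem.2
    have hXik : Xi (i+1+1) s = X1 (Xi (i+1) s) := rfl
    have hb : bseq s (i+1) = bseq s i * Xi (i+1+1) s := Finset.prod_range_succ _ _
    have hXpos : (0:ℝ) ≤ Xi (i+1+1) s := by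
      rw [hXik]; exact (Xi_mem hs (i+2)).1.le
    have hX1pos : (0:ℝ) ≤ X1 s := (X1_mem hs).1.le
    calc bseq s (i+1) * (1 - X1 s)^2
        = (bseq s i * (1 - X1 s)^2) * Xi (i+1+1) s := by rw [hb]; ring
    _ ≤ (X1 s * (1 - Xi (i+1) s)^2) * Xi (i+1+1) s :=
        mul_le_mul_of_nonneg_right ih hXpos
    _ = X1 s * (X1 (Xi (i+1) s) * (1 - Xi (i+1) s)^2) := by rw [hXik]; ring
    _ ≤ X1 s * (1 - X1 (Xi (i+1) s))^2 := mul_le_mul_of_nonneg_left hk hX1pos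
    _ = X1 s * (1 - Xi (i+1+1) s)^2 := by rw [hXik]

lemma sq_sum_bound {s : ℝ} (hs : s ∈ Set.Ioo (0:ℝ) 1) (n : ℕ) :
    ∑ i ∈ Finset.range n, (1 - Xi (i+1) s)^2 ≤ 5 * (-Real.log (X1 s)) := by
  have hterm : ∀ i, (1 - Xi (i+1) s)^2
      ≤ 5 * (Real.log (Xi (i+1+1) s) - Real.log (Xi (i+1) s)) := by
    intro i
    have hmem := Xi_mem hs (i+1)
    have := key1 hmem.1 hmem.2
    exact this
  calc ∑ i ∈ Finset.range n, (1 - Xi (i+1) s)^2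
      ≤ ∑ i ∈ Finset.range n, 5 * (Real.log (Xi (i+1+1) s) - Real.log (Xi (i+1) s)) :=
        Finset.sum_le_sum fun i _ => hterm i
  _ = 5 * (Real.log (Xi (n+1) s) - Real.log (Xi (0+1) s)) := by
        rw [← Finset.mul_sum]
        congr 1
        exact Finset.sum_range_sub (fun i => Real.log (Xi (i+1) s)) n
  _ ≤ 5 * (-Real.log (X1 s)) := by
        have h1 : Real.log (Xi (n+1) s) ≤ 0 :=
          Real.log_nonpos (Xi_mem hs (n+1)).1.le (Xi_mem hs (n+1)).2.le
        have h2 : Xi (0+1) s = X1 s := rfl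
        rw [h2]
        linarith

/-- The master bound function. -/
noncomputable def Ms (s : ℝ) : ℝ := X1 s * (5 * (-Real.log (X1 s))) / (1 - X1 s)^2

lemma bseq_partial {s : ℝ} (hs : s ∈ Set.Ioo (0:ℝ) 1) (n : ℕ) :
    ∑ i ∈ Finset.range n, bseq s i ≤ Ms s := by
  have hX1 := X1_mem hs
  have he : (0:ℝ) < 1 - X1 s := by linarith [hX1.2]
  have he2 : (0:ℝ) < (1 - X1 s)^2 := by positivity
  have hu : (0:ℝ) ≤ -Real.log (X1 s) := by
    have := Real.log_nonpos hX1.1.le hX1.2.le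
    linarith
  rw [Ms, le_div_iff₀ he2]
  calc (∑ i ∈ Finset.range n, bseq s i) * (1 - X1 s)^2
      = ∑ i ∈ Finset.range n, bseq s i * (1 - X1 s)^2 := by rw [Finset.sum_mul]
  _ ≤ ∑ i ∈ Finset.range n, X1 s * (1 - Xi (i+1) s)^2 :=
      Finset.sum_le_sum fun i _ => bseq_bound hs i
  _ = X1 s * ∑ i ∈ Finset.range n, (1 - Xi (i+1) s)^2 := by rw [Finset.mul_sum]
  _ ≤ X1 s * (5 * (-Real.log (X1 s))) :=
      mul_le_mul_of_nonneg_left (sq_sum_bound hs n) hX1.1.le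

lemma Ms_nonneg {s : ℝ} (hs : s ∈ Set.Ioo (0:ℝ) 1) : 0 ≤ Ms s := by
  simpa using bseq_partial hs 0

lemma summable_bseq {s : ℝ} (hs : s ∈ Set.Ioo (0:ℝ) 1) : Summable (bseq s) :=
  summable_of_sum_range_le (fun i => (bseq_pos hs i).le) (bseq_partial hs)

lemma eta_nonneg {s : ℝ} (hs : s ∈ Set.Ioo (0:ℝ) 1) : 0 ≤ eta s := by
  rw [eta_eq]
  exact tsum_nonneg fun i => (bseq_pos hs i).le

lemma eta_le {s : ℝ} (hs : s ∈ Set.Ioo (0:ℝ) 1) : eta s ≤ Ms s := by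
  rw [eta_eq]
  exact Real.tsum_le_of_sum_range_le (fun i => (bseq_pos hs i).le) (bseq_partial hs)

lemma bsq_le_bseq {s : ℝ} (hs : s ∈ Set.Ioo (0:ℝ) 1) (i : ℕ) : (bseq s i)^2 ≤ bseq s i := by
  nlinarith [bseq_pos hs i, bseq_le_one hs i]

lemma bsq_partial {s : ℝ} (hs : s ∈ Set.Ioo (0:ℝ) 1) (n : ℕ) :
    ∑ i ∈ Finset.range n, (bseq s i)^2 ≤ Ms s :=
  le_trans (Finset.sum_le_sum fun i _ => bsq_le_bseq hs i) (bseq_partial hs n)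

lemma summable_bsq {s : ℝ} (hs : s ∈ Set.Ioo (0:ℝ) 1) : Summable (fun i => (bseq s i)^2) :=
  summable_of_sum_range_le (fun i => sq_nonneg _) (bsq_partial hs)

lemma zeta_nonneg {s : ℝ} (hs : s ∈ Set.Ioo (0:ℝ) 1) : 0 ≤ zeta s := by
  rw [zeta_eq]
  exact tsum_nonneg fun i => sq_nonneg _

lemma zeta_le {s : ℝ} (hs : s ∈ Set.Ioo (0:ℝ) 1) : zeta s ≤ Ms s := by
  rw [zeta_eq]
  exact Real.tsum_le_of_sum_range_le (fun i => sq_nonneg _) (bsq_partial hs)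

lemma tseq_eq (s : ℝ) (i : ℕ) :
    tseq s i = (∑ j ∈ Finset.range (i+1), bseq s j) * (bseq s i)^2 := by
  rw [tseq, Finset.sum_mul]
  apply Finset.sum_congr rfl
  intro j hj
  have hji : j + 1 ≤ i + 1 := Nat.succ_le_succ (Nat.lt_succ_iff.mp (Finset.mem_range.mp hj))
  have h3 : (∏ l ∈ Finset.range (j+1), (Xi (l+1) s)^3)
      = (∏ l ∈ Finset.range (j+1), Xi (l+1) s) * ∏ l ∈ Finset.range (j+1), (Xi (l+1) s)^2 := by
    rw [← Finset.prod_mul_distrib]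
    exact Finset.prod_congr rfl fun l _ => by ring
  have h2 : (∏ l ∈ Finset.range (j+1), (Xi (l+1) s)^2)
      * (∏ l ∈ Finset.Ico (j+1) (i+1), (Xi (l+1) s)^2)
      = ∏ l ∈ Finset.range (i+1), (Xi (l+1) s)^2 :=
    Finset.prod_range_mul_prod_Ico _ hji
  have hsq : (bseq s i)^2 = ∏ l ∈ Finset.range (i+1), (Xi (l+1) s)^2 := by
    rw [bseq, ← Finset.prod_pow]
  rw [h3, bseq, hsq, ← h2]
  ring

lemma tseq_nonneg {s : ℝ} (hs : s ∈ Set.Ioo (0:ℝ) 1) (i : ℕ) : 0 ≤ tseq s i := by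
  rw [tseq_eq]
  apply mul_nonneg
  · exact Finset.sum_nonneg fun j _ => (bseq_pos hs j).le
  · exact sq_nonneg _

lemma tseq_partial {s : ℝ} (hs : s ∈ Set.Ioo (0:ℝ) 1) (n : ℕ) :
    ∑ i ∈ Finset.range n, tseq s i ≤ Ms s * Ms s := by
  have h1 : ∀ i, tseq s i ≤ Ms s * (bseq s i)^2 := by
    intro i
    rw [tseq_eq]
    exact mul_le_mul_of_nonneg_right (bseq_partial hs (i+1)) (sq_nonneg _)
  calc ∑ i ∈ Finset.range n, tseq s i
      ≤ ∑ i ∈ Finset.range n, Ms s * (bseq s i)^2 := Finset.sum_le_sum fun i _ => h1 i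
  _ = Ms s * ∑ i ∈ Finset.range n, (bseq s i)^2 := by rw [Finset.mul_sum]
  _ ≤ Ms s * Ms s := mul_le_mul_of_nonneg_left (bsq_partial hs n) (Ms_nonneg hs)

lemma summable_tseq {s : ℝ} (hs : s ∈ Set.Ioo (0:ℝ) 1) : Summable (tseq s) :=
  summable_of_sum_range_le (tseq_nonneg hs) (tseq_partial hs)

lemma theta_nonneg {s : ℝ} (hs : s ∈ Set.Ioo (0:ℝ) 1) : 0 ≤ theta s := by
  rw [theta_eq]
  exact tsum_nonneg (tseq_nonneg hs)

lemma theta_le {s : ℝ} (hs : s ∈ Set.Ioo (0:ℝ) 1) : theta s ≤ Ms s * Ms s := by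
  rw [theta_eq]
  exact Real.tsum_le_of_sum_range_le (tseq_nonneg hs) (tseq_partial hs)

/-! ### Recursions -/

lemma eta_rec {s : ℝ} (hs : s ∈ Set.Ioo (0:ℝ) 1) :
    eta s = X1 s * (1 + eta (X1 s)) := by
  rw [eta_eq, (summable_bseq hs).tsum_eq_zero_add]
  simp only [bseq_succ, bseq_zero]
  rw [tsum_mul_left, ← eta_eq]
  ring

lemma zeta_rec {s : ℝ} (hs : s ∈ Set.Ioo (0:ℝ) 1) :
    zeta s = (X1 s)^2 * (1 + zeta (X1 s)) := by
  rw [zeta_eq, (summable_bsq hs).tsum_eq_zero_add]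
  simp only [bseq_succ, bseq_zero, mul_pow]
  rw [tsum_mul_left, ← zeta_eq]
  ring

lemma bseq_sum_succ (s : ℝ) (i : ℕ) :
    ∑ j ∈ Finset.range (i+1+1), bseq s j
      = X1 s * (1 + ∑ j ∈ Finset.range (i+1), bseq (X1 s) j) := by
  rw [Finset.sum_range_succ' (fun j => bseq s j) (i+1)]
  simp only [bseq_succ, bseq_zero]
  rw [← Finset.mul_sum]
  ring

lemma tseq_zero (s : ℝ) : tseq s 0 = (X1 s)^3 := by
  rw [tseq_eq, bseq_zero]
  simp [bseq_zero]
  ring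

lemma tseq_succ (s : ℝ) (i : ℕ) :
    tseq s (i+1) = (X1 s)^3 * ((bseq (X1 s) i)^2 + tseq (X1 s) i) := by
  rw [tseq_eq, tseq_eq, bseq_sum_succ, bseq_succ]
  ring

lemma theta_rec {s : ℝ} (hs : s ∈ Set.Ioo (0:ℝ) 1) :
    theta s = (X1 s)^3 * (1 + zeta (X1 s) + theta (X1 s)) := by
  have hX1 := X1_mem hs
  rw [theta_eq, (summable_tseq hs).tsum_eq_zero_add]
  simp only [tseq_succ, tseq_zero]
  rw [tsum_mul_left, (summable_bsq hX1).tsum_add (summable_tseq hX1), ← zeta_eq, ← theta_eq]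
  ring

/-! ### Limits -/

lemma X1_tendsto : Tendsto X1 (nhdsWithin (0:ℝ) (Set.Ioi 0)) (nhdsWithin 0 (Set.Ioi 0)) := by
  have hlog : Tendsto Real.log (nhdsWithin (0:ℝ) (Set.Ioi 0)) atBot :=
    Real.tendsto_log_nhdsGT_zero
  have h1 : Tendsto (fun t : ℝ => 1 - Real.log t) (nhdsWithin (0:ℝ) (Set.Ioi 0)) atTop := by
    have h := tendsto_atTop_add_const_left _ 1 (tendsto_neg_atBot_atTop.comp hlog)
    refine h.congr fun t => ?_
    simp [sub_eq_add_neg]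
  have h2 : Tendsto X1 (nhdsWithin (0:ℝ) (Set.Ioi 0)) (nhds 0) :=
    tendsto_inv_atTop_zero.comp h1
  rw [tendsto_nhdsWithin_iff]
  refine ⟨h2, ?_⟩
  filter_upwards [Ioo_mem_nhdsGT (zero_lt_one' ℝ)] with t ht
  exact (X1_mem ht).1

lemma Ms_tendsto : Tendsto Ms (nhdsWithin (0:ℝ) (Set.Ioi 0)) (nhds 0) := by
  have hnum : Tendsto (fun y : ℝ => y * (5 * (-Real.log y)))
      (nhdsWithin (0:ℝ) (Set.Ioi 0)) (nhds 0) := by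
    have h := (tendsto_log_mul_rpow_nhdsGT_zero one_pos).const_mul (-5 : ℝ)
    rw [mul_zero] at h
    refine h.congr fun y => ?_
    rw [Real.rpow_one]
    ring
  have hden : Tendsto (fun y : ℝ => (1 - y)^2) (nhdsWithin (0:ℝ) (Set.Ioi 0)) (nhds 1) := by
    have hc : Continuous (fun y : ℝ => (1 - y)^2) := by continuity
    have h := hc.tendsto (0:ℝ)
    norm_num at h
    exact h.mono_left nhdsWithin_le_nhds
  have hG : Tendsto (fun y : ℝ => y * (5 * (-Real.log y)) / (1 - y)^2)
      (nhdsWithin (0:ℝ) (Set.Ioi 0)) (nhds 0) := by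
    have := hnum.div hden one_ne_zero
    rw [zero_div] at this
    exact this
  exact hG.comp X1_tendsto

lemma eventually_Ioo : ∀ᶠ t in nhdsWithin (0:ℝ) (Set.Ioi 0), t ∈ Set.Ioo (0:ℝ) 1 :=
  Ioo_mem_nhdsGT (zero_lt_one' ℝ)

lemma MsX1_tendsto : Tendsto (fun t => Ms (X1 t)) (nhdsWithin (0:ℝ) (Set.Ioi 0)) (nhds 0) :=
  Ms_tendsto.comp X1_tendsto

lemma etaX1_tendsto : Tendsto (fun t => eta (X1 t)) (nhdsWithin (0:ℝ) (Set.Ioi 0)) (nhds 0) := by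
  apply squeeze_zero'
  · filter_upwards [eventually_Ioo] with t ht
    exact eta_nonneg (X1_mem ht)
  · filter_upwards [eventually_Ioo] with t ht
    exact eta_le (X1_mem ht)
  · exact MsX1_tendsto

lemma zetaX1_tendsto : Tendsto (fun t => zeta (X1 t)) (nhdsWithin (0:ℝ) (Set.Ioi 0)) (nhds 0) := by
  apply squeeze_zero'
  · filter_upwards [eventually_Ioo] with t ht
    exact zeta_nonneg (X1_mem ht)
  · filter_upwards [eventually_Ioo] with t ht
    exact zeta_le (X1_mem ht)
  · exact MsX1_tendsto

lemma thetaX1_tendsto : Tendsto (fun t => theta (X1 t)) (nhdsWithin (0:ℝ) (Set.Ioi 0)) (nhds 0) := by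
  apply squeeze_zero'
  · filter_upwards [eventually_Ioo] with t ht
    exact theta_nonneg (X1_mem ht)
  · filter_upwards [eventually_Ioo] with t ht
    exact theta_le (X1_mem ht)
  · have := MsX1_tendsto.mul MsX1_tendsto
    simpa using this

lemma eta_div_tendsto :
    Tendsto (fun t => eta t / X1 t) (nhdsWithin (0:ℝ) (Set.Ioi 0)) (nhds 1) := by
  have h : Tendsto (fun t => 1 + eta (X1 t)) (nhdsWithin (0:ℝ) (Set.Ioi 0)) (nhds 1) := by
    have := (tendsto_const_nhds (x := (1:ℝ))).add etaX1_tendsto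
    simpa using this
  apply h.congr'
  filter_upwards [eventually_Ioo] with t ht
  have hX0 : X1 t ≠ 0 := (X1_mem ht).1.ne'
  rw [eta_rec ht, mul_div_cancel_left₀ _ hX0]

lemma zeta_div_tendsto :
    Tendsto (fun t => zeta t / (X1 t)^2) (nhdsWithin (0:ℝ) (Set.Ioi 0)) (nhds 1) := by
  have h : Tendsto (fun t => 1 + zeta (X1 t)) (nhdsWithin (0:ℝ) (Set.Ioi 0)) (nhds 1) := by
    have := (tendsto_const_nhds (x := (1:ℝ))).add zetaX1_tendsto
    simpa using this
  apply h.congr'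
  filter_upwards [eventually_Ioo] with t ht
  have hX0 : (X1 t)^2 ≠ 0 := pow_ne_zero 2 (X1_mem ht).1.ne'
  rw [zeta_rec ht, mul_div_cancel_left₀ _ hX0]

lemma theta_div_tendsto :
    Tendsto (fun t => theta t / (X1 t)^3) (nhdsWithin (0:ℝ) (Set.Ioi 0)) (nhds 1) := by
  have h : Tendsto (fun t => 1 + zeta (X1 t) + theta (X1 t))
      (nhdsWithin (0:ℝ) (Set.Ioi 0)) (nhds 1) := by
    have := ((tendsto_const_nhds (x := (1:ℝ))).add zetaX1_tendsto).add thetaX1_tendsto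
    simpa using this
  apply h.congr'
  filter_upwards [eventually_Ioo] with t ht
  have hX0 : (X1 t)^3 ≠ 0 := pow_ne_zero 3 (X1_mem ht).1.ne'
  rw [theta_rec ht, mul_div_cancel_left₀ _ hX0]

end IterLog

open Filter in
/-- As `t → 0⁺`, `η(t)³/X₁(t)³ → 1`, `η(t)ζ(t)/X₁(t)³ → 1` and `θ(t)/X₁(t)³ → 1`. -/
theorem eta_zeta_theta_asymptotics :
    Tendsto (fun t => eta t ^ 3 / (Xi 1 t) ^ 3) (nhdsWithin 0 (Set.Ioi 0)) (nhds 1) ∧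
    Tendsto (fun t => eta t * zeta t / (Xi 1 t) ^ 3) (nhdsWithin 0 (Set.Ioi 0)) (nhds 1) ∧
    Tendsto (fun t => theta t / (Xi 1 t) ^ 3) (nhdsWithin 0 (Set.Ioi 0)) (nhds 1) := by
  have hXi1 : ∀ t : ℝ, Xi 1 t = X1 t := fun t => rfl
  refine ⟨?_, ?_, ?_⟩
  · have h := IterLog.eta_div_tendsto.pow 3
    rw [one_pow] at h
    refine h.congr fun t => ?_
    rw [div_pow, hXi1]
  · have h := IterLog.eta_div_tendsto.mul IterLog.zeta_div_tendsto
    rw [mul_one] at h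
    refine h.congr fun t => ?_
    rw [div_mul_div_comm, hXi1]
    congr 1
    ring
  · have h := IterLog.theta_div_tendsto
    refine h.congr fun t => ?_
    rw [hXi1]
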